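/- ∫_{-∞}^{∞} z⁵·2φ(z)Φ(λz) dz = bδ(15 + 20λ² + 8λ⁴)/(1+λ²)², where b = √(2/π) and δ = λ/√(1+λ²); i.e., the fifth moment of the skew normal SN(λ). -/

import Mathlib

open Real MeasureTheory Filter

/-- standard normal pdf -/
noncomputable def phi (z : ℝ) : ℝ := (Real.sqrt (2 * Real.pi))⁻¹ * Real.exp (-z ^ 2 / 2)

/-- standard normal cdf -/
noncomputable def Phi (z : ℝ) : ℝ := ∫ t in Set.Iic z, phi t

noncomputable def bconst : ℝ := Real.sqrt (2 / Real.pi)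

noncomputable def del (l : ℝ) : ℝ := l / Real.sqrt (1 + l ^ 2)

/-- GABSN normalizing constant -/
noncomputable def C (a β l : ℝ) : ℝ :=
  1 + 3 * a * β - a * bconst * del l - β * bconst * del l * (3 + 2 * l ^ 2) / (1 + l ^ 2)
    + a ^ 2 / 2 + 15 * β ^ 2 / 2

/-- GABSN density -/
noncomputable def f (a β l z : ℝ) : ℝ :=
  (((1 - a * z - β * z ^ 3) ^ 2 + 1) * phi z * Phi (l * z)) / C a β l

lemma pow_div_fact_le_exp {x : ℝ} (hx : 0 ≤ x) (n : ℕ) : x ^ n / (n.factorial : ℝ) ≤ Real.exp x := by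
  calc x ^ n / (n.factorial : ℝ) ≤ ∑ i ∈ Finset.range (n+1), x ^ i / (i.factorial : ℝ) := by
        refine Finset.single_le_sum (f := fun i => x ^ i / ((i.factorial : ℝ) : ℝ)) ?_ (Finset.self_mem_range_succ n)
        intro i _; positivity
    _ ≤ Real.exp x := Real.sum_le_exp_of_nonneg hx _

lemma integrable_pow_mul_gauss {b : ℝ} (hb : 0 < b) (n : ℕ) :
    Integrable fun z : ℝ => z ^ n * Real.exp (-b * z ^ 2) := by
  have key : ∀ z : ℝ, ‖z ^ n * Real.exp (-b * z ^ 2)‖ ≤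
      Real.exp (-b * z ^ 2) + ((n.factorial : ℝ) * (2 / b) ^ n) * Real.exp (-(b/2) * z ^ 2) := by
    intro z
    have h1 : |z| ^ n ≤ 1 + z ^ (2 * n) := by
      rcases le_or_gt (|z|) 1 with h | h
      · have := pow_le_one₀ (abs_nonneg z) h (n := n)
        have h2 : (0:ℝ) ≤ z ^ (2*n) := by rw [pow_mul]; positivity
        linarith
      · have h2 : |z| ^ n ≤ |z| ^ (2 * n) := pow_le_pow_right₀ h.le (by omega)
        have h3 : |z| ^ (2*n) = z ^ (2*n) := by
          rw [← abs_pow, abs_of_nonneg (by rw [pow_mul]; positivity)]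
        rw [h3] at h2; linarith
    have h2 : z ^ (2 * n) ≤ ((n.factorial : ℝ) * (2 / b) ^ n) * Real.exp ((b/2) * z ^ 2) := by
      have h3 := pow_div_fact_le_exp (x := (b/2) * z ^ 2) (by positivity) n
      have h4 : ((b/2) * z ^ 2) ^ n = (b/2)^n * z ^ (2*n) := by
        rw [mul_pow, ← pow_mul]
      rw [h4, div_le_iff₀ (by positivity)] at h3
      calc z ^ (2*n) = ((n.factorial : ℝ) * (2/b)^n) * ((b/2)^n * z^(2*n)) / (n.factorial : ℝ) := by
            rw [div_pow, div_pow]; field_simp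
        _ ≤ ((n.factorial : ℝ) * (2/b)^n) * (Real.exp ((b/2) * z^2) * (n.factorial : ℝ)) / (n.factorial : ℝ) := by
            gcongr
        _ = ((n.factorial : ℝ) * (2/b)^n) * Real.exp ((b/2) * z^2) := by
            field_simp
    have hex : (0:ℝ) < Real.exp (-b * z ^ 2) := Real.exp_pos _
    rw [norm_mul, norm_pow, Real.norm_eq_abs, Real.norm_eq_abs,
      abs_of_nonneg hex.le]
    calc |z| ^ n * Real.exp (-b * z^2) ≤ (1 + z^(2*n)) * Real.exp (-b*z^2) := by
          gcongr
      _ ≤ (1 + ((n.factorial : ℝ) * (2/b)^n) * Real.exp ((b/2)*z^2)) * Real.exp (-b*z^2) := by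
          gcongr
      _ = Real.exp (-b*z^2) + ((n.factorial : ℝ) * (2/b)^n) * (Real.exp ((b/2)*z^2) * Real.exp (-b*z^2)) := by
          ring
      _ = Real.exp (-b * z ^ 2) + ((n.factorial : ℝ) * (2 / b) ^ n) * Real.exp (-(b/2) * z ^ 2) := by
          rw [← Real.exp_add]; ring_nf
  refine Integrable.mono' ((integrable_exp_neg_mul_sq hb).add
    ((integrable_exp_neg_mul_sq (by positivity : (0:ℝ) < b/2)).const_mul _)) ?_
    (Filter.Eventually.of_forall key)
  exact ((continuous_pow n).mul (by fun_prop)).aestronglyMeasurable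

lemma integrable_pow_mul_gauss2 {a : ℝ} (ha : 0 < a) (n : ℕ) :
    Integrable fun z : ℝ => z ^ n * Real.exp (-a * z ^ 2 / 2) := by
  have := integrable_pow_mul_gauss (by positivity : (0:ℝ) < a/2) n
  refine this.congr ?_
  filter_upwards with z
  congr 1; ring_nf

lemma sqrt_two_pi_pos : (0:ℝ) < Real.sqrt (2 * Real.pi) :=
  Real.sqrt_pos.mpr (by positivity)

lemma continuous_phi : Continuous phi := by
  unfold phi; fun_prop

lemma phi_nonneg (z : ℝ) : 0 ≤ phi z := by
  unfold phi; positivity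

lemma phi_le (z : ℝ) : phi z ≤ (Real.sqrt (2 * Real.pi))⁻¹ := by
  unfold phi
  have h : Real.exp (-z ^ 2 / 2) ≤ 1 := by
    rw [Real.exp_le_one_iff]; nlinarith [sq_nonneg z]
  nlinarith [inv_pos.mpr sqrt_two_pi_pos, Real.exp_pos (-z^2/2)]

lemma integrable_pow_mul_phi (n : ℕ) : Integrable fun z : ℝ => z ^ n * phi z := by
  have := ((integrable_pow_mul_gauss2 one_pos n).const_mul (Real.sqrt (2 * Real.pi))⁻¹)
  refine this.congr ?_
  filter_upwards with z
  unfold phi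
  rw [show -(1:ℝ) * z ^ 2 / 2 = -z^2/2 by ring]
  ring

lemma integrable_phi : Integrable phi := by
  have := integrable_pow_mul_phi 0
  simpa using this

lemma integral_phi : ∫ z : ℝ, phi z = 1 := by
  unfold phi
  rw [MeasureTheory.integral_const_mul]
  have h : ∀ z : ℝ, Real.exp (-z^2/2) = Real.exp (-(1/2 : ℝ) * z^2) := by
    intro z; congr 1; ring
  simp_rw [h]
  rw [integral_gaussian]
  rw [show (Real.pi / (1/2)) = 2 * Real.pi by ring]
  exact inv_mul_cancel₀ sqrt_two_pi_pos.ne'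

lemma Phi_nonneg (z : ℝ) : 0 ≤ Phi z :=
  MeasureTheory.integral_nonneg fun t => phi_nonneg t

lemma Phi_le_one (z : ℝ) : Phi z ≤ 1 := by
  rw [← integral_phi]
  exact MeasureTheory.setIntegral_le_integral integrable_phi
    (Filter.Eventually.of_forall fun t => phi_nonneg t)

lemma hasDerivAt_Phi (x : ℝ) : HasDerivAt Phi (phi x) x := by
  have heq : ∀ u : ℝ, Phi u = Phi 0 + ∫ t in (0:ℝ)..u, phi t := by
    intro u
    have := intervalIntegral.integral_Iic_sub_Iic (f := phi) (μ := volume)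
      integrable_phi.integrableOn integrable_phi.integrableOn (a := 0) (b := u)
    unfold Phi
    linarith
  have h : HasDerivAt (fun u : ℝ => Phi 0 + ∫ t in (0:ℝ)..u, phi t) (phi x) x := by
    have h0 := intervalIntegral.integral_hasDerivAt_right
      (f := phi) (a := (0:ℝ)) (b := x)
      (continuous_phi.intervalIntegrable _ _)
      (continuous_phi.stronglyMeasurableAtFilter _ _)
      continuous_phi.continuousAt
    simpa using h0
  exact h.congr_of_eventuallyEq (Filter.Eventually.of_forall heq)

lemma hasDerivAt_phi (x : ℝ) : HasDerivAt phi (-x * phi x) x := by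
  have h1 : HasDerivAt (fun x : ℝ => -x ^ 2 / 2) (-x) x := by
    have := ((hasDerivAt_pow 2 x).neg).div_const 2
    refine this.congr_deriv ?_
    simp; ring
  have h2 := (h1.exp).const_mul (Real.sqrt (2 * Real.pi))⁻¹
  have : phi = fun y => (Real.sqrt (2 * Real.pi))⁻¹ * Real.exp (-y ^ 2 / 2) := rfl
  rw [this]
  refine h2.congr_deriv ?_
  ring

lemma gauss_int_base {a : ℝ} (ha : 0 < a) :
    ∫ z : ℝ, Real.exp (-a * z ^ 2 / 2) = Real.sqrt (2 * Real.pi / a) := by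
  have h : ∀ z : ℝ, Real.exp (-a * z ^ 2 / 2) = Real.exp (-(a/2) * z ^ 2) := by
    intro z; congr 1; ring
  simp_rw [h]
  rw [integral_gaussian]
  rw [show Real.pi / (a/2) = 2 * Real.pi / a by field_simp]

lemma gauss_moment_rec {a : ℝ} (ha : 0 < a) (n : ℕ) :
    ∫ z : ℝ, z ^ (n + 2) * Real.exp (-a * z ^ 2 / 2)
      = ((n : ℝ) + 1) / a * ∫ z : ℝ, z ^ n * Real.exp (-a * z ^ 2 / 2) := by
  set u : ℝ → ℝ := fun z => z ^ (n + 1) with hu_def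
  set u' : ℝ → ℝ := fun z => ((n : ℝ) + 1) * z ^ n with hu'_def
  set v : ℝ → ℝ := fun z => -(1/a) * Real.exp (-a * z ^ 2 / 2) with hv_def
  set v' : ℝ → ℝ := fun z => z * Real.exp (-a * z ^ 2 / 2) with hv'_def
  have hu : ∀ x : ℝ, HasDerivAt u (u' x) x := by
    intro x
    simpa [hu_def, hu'_def] using hasDerivAt_pow (n + 1) x
  have hv : ∀ x : ℝ, HasDerivAt v (v' x) x := by
    intro x
    have h1 : HasDerivAt (fun z : ℝ => -a * z ^ 2 / 2) (-a * x) x := by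
      have := ((hasDerivAt_pow 2 x).const_mul (-a)).div_const 2
      refine this.congr_deriv ?_
      simp; ring
    have h2 := (h1.exp).const_mul (-(1/a))
    refine h2.congr_deriv ?_
    simp only [hv'_def]
    field_simp
  have key := integral_mul_deriv_eq_deriv_mul_of_integrable (fun x _ => hu x) (fun x _ => hv x) ?_ ?_ ?_
  · have hL : ∀ z : ℝ, u z * v' z = z ^ (n + 2) * Real.exp (-a * z ^ 2 / 2) := by
      intro z; simp only [hu_def, hv'_def]; ring
    have hR : ∀ z : ℝ, u' z * v z
        = (-(((n:ℝ)+1)/a)) * (z ^ n * Real.exp (-a * z ^ 2 / 2)) := by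
      intro z; simp only [hu'_def, hv_def]; ring
    calc ∫ z : ℝ, z ^ (n + 2) * Real.exp (-a * z ^ 2 / 2)
        = ∫ z : ℝ, u z * v' z := by simp_rw [hL]
      _ = -∫ z : ℝ, u' z * v z := key
      _ = -∫ z : ℝ, (-(((n:ℝ)+1)/a)) * (z ^ n * Real.exp (-a * z ^ 2 / 2)) := by
          simp_rw [hR]
      _ = ((n : ℝ) + 1) / a * ∫ z : ℝ, z ^ n * Real.exp (-a * z ^ 2 / 2) := by
          rw [integral_const_mul]; ring
  · refine ((integrable_pow_mul_gauss2 ha (n + 2)).congr ?_)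
    filter_upwards with z
    simp only [hu_def, hv'_def, Pi.mul_apply]
    ring
  · refine (((integrable_pow_mul_gauss2 ha n).const_mul (-(((n:ℝ)+1)/a))).congr ?_)
    filter_upwards with z
    simp only [hu'_def, hv_def, Pi.mul_apply]
    ring
  · refine (((integrable_pow_mul_gauss2 ha (n+1)).const_mul (-(1/a))).congr ?_)
    filter_upwards with z
    simp only [hu_def, hv_def, Pi.mul_apply]
    ring

theorem stmt_11 (l : ℝ) :
    ∫ z : ℝ, z ^ 5 * (2 * phi z * Phi (l * z))
      = bconst * del l * (15 + 20 * l ^ 2 + 8 * l ^ 4) / (1 + l ^ 2) ^ 2 := by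
  have ha : (0:ℝ) < 1 + l ^ 2 := by positivity
  set a : ℝ := 1 + l ^ 2 with ha_def
  set u : ℝ → ℝ := fun z => 2 * Phi (l * z) with hu_def
  set u' : ℝ → ℝ := fun z => 2 * l * phi (l * z) with hu'_def
  set v : ℝ → ℝ := fun z => -((z ^ 4 + 4 * z ^ 2 + 8) * phi z) with hv_def
  set v' : ℝ → ℝ := fun z => z ^ 5 * phi z with hv'_def
  have hu : ∀ x : ℝ, HasDerivAt u (u' x) x := by
    intro x
    have h1 : HasDerivAt (fun x : ℝ => l * x) l x := by
      simpa using (hasDerivAt_id x).const_mul l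
    have h2 := ((hasDerivAt_Phi (l * x)).comp x h1).const_mul 2
    refine h2.congr_deriv ?_
    simp only [hu'_def]; ring
  have hv : ∀ x : ℝ, HasDerivAt v (v' x) x := by
    intro x
    have hp : HasDerivAt (fun z : ℝ => z ^ 4 + 4 * z ^ 2 + 8) (4 * x ^ 3 + 8 * x) x := by
      have := ((hasDerivAt_pow 4 x).add ((hasDerivAt_pow 2 x).const_mul 4)).add_const 8
      refine this.congr_deriv ?_
      simp; ring
    have h2 := (hp.mul (hasDerivAt_phi x)).neg
    refine h2.congr_deriv ?_
    simp only [hv'_def]; ring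
  have hubdd : ∃ C, ∀ x, ‖u x‖ ≤ C := by
    refine ⟨2, fun x => ?_⟩
    simp only [hu_def, norm_mul, Real.norm_ofNat, Real.norm_eq_abs]
    have h1 := Phi_nonneg (l * x)
    have h2 := Phi_le_one (l * x)
    rw [abs_of_nonneg h1]; linarith
  have hum : AEStronglyMeasurable u volume := by
    have : Continuous u := by
      rw [continuous_iff_continuousAt]; exact fun x => (hu x).continuousAt
    exact this.aestronglyMeasurable
  have hv_int : Integrable v := by
    refine ((((integrable_pow_mul_phi 4).add
      ((integrable_pow_mul_phi 2).const_mul 4)).add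
      ((integrable_pow_mul_phi 0).const_mul 8)).neg).congr ?_
    filter_upwards with z
    simp only [hv_def, Pi.neg_apply, Pi.add_apply]
    ring
  have huv' : Integrable (u * v') := integrable_pow_mul_phi 5 |>.bdd_mul hum (Filter.Eventually.of_forall hubdd.choose_spec)
  have huv : Integrable (u * v) := hv_int.bdd_mul hum (Filter.Eventually.of_forall hubdd.choose_spec)
  have hu'v : Integrable (u' * v) := by
    have hpp : ∀ (n : ℕ), Integrable (fun z : ℝ => z ^ n * (phi z * phi (l * z))) := by
      intro n
      refine ((integrable_pow_mul_gauss2 ha n).const_mul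
        ((Real.sqrt (2 * Real.pi))⁻¹ ^ 2)).congr ?_
      filter_upwards with z
      simp only [phi]
      have hexp : Real.exp (-z ^ 2 / 2) * Real.exp (-(l * z) ^ 2 / 2)
          = Real.exp (-a * z ^ 2 / 2) := by
        rw [← Real.exp_add]; congr 1; simp only [ha_def]; ring
      linear_combination (-(Real.sqrt (2 * Real.pi))⁻¹ ^ 2 * z ^ n) * hexp
    refine (((((hpp 4).add ((hpp 2).const_mul 4)).add
      ((hpp 0).const_mul 8)).const_mul (-(2 * l))).congr ?_)
    filter_upwards with z
    simp only [hu'_def, hv_def, Pi.mul_apply, Pi.add_apply]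
    ring
  have key := integral_mul_deriv_eq_deriv_mul_of_integrable (fun x _ => hu x) (fun x _ => hv x) huv' hu'v huv
  -- Gaussian moments
  set E0 : ℝ := ∫ z : ℝ, Real.exp (-a * z ^ 2 / 2) with hE0_def
  have hE0' : (∫ z : ℝ, z ^ 0 * Real.exp (-a * z ^ 2 / 2)) = E0 := by
    simp [hE0_def]
  have hE2 : (∫ z : ℝ, z ^ 2 * Real.exp (-a * z ^ 2 / 2)) = 1 / a * E0 := by
    have h2 : (∫ z : ℝ, z ^ 2 * Real.exp (-a * z ^ 2 / 2))
        = (((0:ℕ) : ℝ) + 1) / a * ∫ z : ℝ, z ^ 0 * Real.exp (-a * z ^ 2 / 2) :=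
      gauss_moment_rec ha 0
    rw [h2, hE0']
    norm_num
  have hE4 : (∫ z : ℝ, z ^ 4 * Real.exp (-a * z ^ 2 / 2)) = 3 / a ^ 2 * E0 := by
    have h4 : (∫ z : ℝ, z ^ 4 * Real.exp (-a * z ^ 2 / 2))
        = (((2:ℕ) : ℝ) + 1) / a * ∫ z : ℝ, z ^ 2 * Real.exp (-a * z ^ 2 / 2) :=
      gauss_moment_rec ha 2
    rw [h4, hE2]
    push_cast
    field_simp
    ring
  -- rewrite LHS of key
  have hL : (∫ z : ℝ, z ^ 5 * (2 * phi z * Phi (l * z))) = ∫ x : ℝ, u x * v' x := by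
    refine integral_congr_ae (Filter.Eventually.of_forall fun z => ?_)
    simp only [hu_def, hv'_def, Pi.mul_apply]
    ring
  -- rewrite RHS of key
  set c : ℝ := (Real.sqrt (2 * Real.pi))⁻¹ with hc_def
  have hR : (∫ x : ℝ, u' x * v x)
      = (-(2 * l * c ^ 2)) * (∫ z : ℝ, (z ^ 4 * Real.exp (-a * z ^ 2 / 2)
          + 4 * (z ^ 2 * Real.exp (-a * z ^ 2 / 2)) + 8 * Real.exp (-a * z ^ 2 / 2))) := by
    rw [← integral_const_mul]
    refine integral_congr_ae (Filter.Eventually.of_forall fun z => ?_)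
    simp only [hu'_def, hv_def, Pi.mul_apply, phi, ← hc_def]
    have hexp : Real.exp (-z ^ 2 / 2) * Real.exp (-(l * z) ^ 2 / 2)
        = Real.exp (-a * z ^ 2 / 2) := by
      rw [← Real.exp_add]; congr 1; simp only [ha_def]; ring
    linear_combination (-(2 * l * c ^ 2 * (z ^ 4 + 4 * z ^ 2 + 8))) * hexp
  have hsplit : (∫ z : ℝ, (z ^ 4 * Real.exp (-a * z ^ 2 / 2)
          + 4 * (z ^ 2 * Real.exp (-a * z ^ 2 / 2)) + 8 * Real.exp (-a * z ^ 2 / 2)))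
      = (3 / a ^ 2 + 4 * (1 / a) + 8) * E0 := by
    have g4 := integrable_pow_mul_gauss2 ha 4
    have g2 := integrable_pow_mul_gauss2 ha 2
    have g0 : Integrable fun z : ℝ => Real.exp (-a * z ^ 2 / 2) := by
      simpa using integrable_pow_mul_gauss2 ha 0
    have i2 : Integrable (fun z : ℝ => 4 * (z ^ 2 * Real.exp (-a * z ^ 2 / 2))) :=
      g2.const_mul 4
    have i0 : Integrable (fun z : ℝ => 8 * Real.exp (-a * z ^ 2 / 2)) := g0.const_mul 8
    have i24 : Integrable (fun z : ℝ => z ^ 4 * Real.exp (-a * z ^ 2 / 2)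
        + 4 * (z ^ 2 * Real.exp (-a * z ^ 2 / 2))) := g4.add i2
    rw [integral_add i24 i0, integral_add g4 i2, integral_const_mul, integral_const_mul,
      hE4, hE2, ← hE0_def]
    ring
  -- assemble
  rw [hL, key, hR, hsplit]
  -- square root bookkeeping
  have hc2 : c ^ 2 = (2 * Real.pi)⁻¹ := by
    rw [hc_def, inv_pow, Real.sq_sqrt (by positivity : (0:ℝ) ≤ 2 * Real.pi)]
  set sπ : ℝ := Real.sqrt Real.pi with hsπ_def
  set sa : ℝ := Real.sqrt a with hsa_def
  have hsπ : sπ ^ 2 = Real.pi := Real.sq_sqrt Real.pi_pos.le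
  have hsa : sa ^ 2 = a := Real.sq_sqrt ha.le
  have hsπ0 : sπ ≠ 0 := by positivity
  have hsa0 : sa ≠ 0 := by
    rw [hsa_def]; positivity
  have hE0 : E0 = Real.sqrt 2 * sπ / sa := by
    rw [hE0_def, gauss_int_base ha, Real.sqrt_div (by positivity : (0:ℝ) ≤ 2 * Real.pi),
      Real.sqrt_mul (by norm_num : (0:ℝ) ≤ 2), hsπ_def, hsa_def]
  have hb : bconst = Real.sqrt 2 / sπ := by
    rw [bconst, Real.sqrt_div (by norm_num : (0:ℝ) ≤ 2), hsπ_def]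
  have hd : del l = l / sa := by
    rw [del, hsa_def, ha_def]
  rw [hE0, hb, hd, hc2,
    show (15 + 20 * l ^ 2 + 8 * l ^ 4 : ℝ) = 3 + 4 * a + 8 * a ^ 2 by rw [ha_def]; ring,
    ← hsπ, ← hsa]
  have hs2 : (0:ℝ) ≤ Real.sqrt 2 := Real.sqrt_nonneg 2
  field_simp
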